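/- arXiv:1008.0025 — 6 statements merged into one kernel-verified Lean document; each statement's English description precedes it below -/
import Mathlib

section
/- Let A and B be nonsingular n×n matrices over the extended tropical semifield D(ℝ). Then the product AB does not lie in M_n(G₀); that is, at least one entry of AB is not in the ghost ideal G₀. -/
noncomputable section

/-- The extended tropical semifield `D(ℝ)`: `bot` is `-∞`; `nb g r` is the element of
underlying value `r : ℝ`, ghost if `g = true`, tangible if `g = false`. -/
inductive DR : Type where
  | bot : DR
  | nb : Bool → ℝ → DR

namespace DR

/-- Supertropical addition on `D(ℝ)`. -/
def add : DR → DR → DR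
  | bot, y => y
  | x, bot => x
  | nb b r, nb c s => if r < s then nb c s else if s < r then nb b r else nb true r

/-- Supertropical multiplication on `D(ℝ)`. -/
def mul : DR → DR → DR
  | bot, _ => bot
  | _, bot => bot
  | nb b r, nb c s => nb (b || c) (r + s)

theorem bot_add (x : DR) : add bot x = x := by cases x <;> rfl

theorem add_bot (x : DR) : add x bot = x := by cases x <;> rfl

theorem bot_mul (x : DR) : mul bot x = bot := by cases x <;> rfl

theorem mul_bot (x : DR) : mul x bot = bot := by cases x <;> rfl

theorem add_comm' (x y : DR) : add x y = add y x := by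
  cases x <;> cases y <;> (try rfl)
  simp only [add]
  split_ifs <;>
    first
      | rfl
      | (exfalso; linarith)
      | (congr 1 <;> first | rfl | linarith)

theorem add_assoc' (x y z : DR) : add (add x y) z = add x (add y z) := by
  cases x with
  | bot => rw [bot_add, bot_add]
  | nb b r =>
    cases y with
    | bot => rw [add_bot, bot_add]
    | nb c s =>
      cases z with
      | bot => rw [add_bot, add_bot]
      | nb d t =>
        simp only [add]
        split_ifs <;>
          simp only [add] <;>
          (try split_ifs) <;>
          first
            | rfl
            | (exfalso; linarith)
            | (congr 1 <;> first | rfl | linarith)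

theorem mul_comm' (x y : DR) : mul x y = mul y x := by
  cases x <;> cases y <;> (try rfl)
  simp [mul, Bool.or_comm, add_comm]

theorem mul_assoc' (x y z : DR) : mul (mul x y) z = mul x (mul y z) := by
  cases x <;> cases y <;> cases z <;> (try rfl) <;>
    simp [mul, Bool.or_assoc, add_assoc]

theorem one_mul' (x : DR) : mul (nb false 0) x = x := by
  cases x <;> simp [mul]

theorem left_distrib' (x y z : DR) : mul x (add y z) = add (mul x y) (mul x z) := by
  cases x with
  | bot => simp [bot_mul, bot_add]
  | nb b r =>
    cases y with
    | bot => simp [bot_add, mul_bot]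
    | nb c s =>
      cases z with
      | bot => simp [add_bot, mul_bot]
      | nb d t =>
        simp only [mul, add]
        split_ifs <;>
          simp only [mul, add, Bool.or_true, Bool.true_or] <;>
          (try split_ifs) <;>
          first
            | rfl
            | (exfalso; linarith)
            | (congr 1 <;> first | rfl | linarith)

theorem right_distrib' (x y z : DR) : mul (add x y) z = add (mul x z) (mul y z) := by
  rw [mul_comm' (add x y) z, left_distrib', mul_comm' z x, mul_comm' z y]

instance : Add DR := ⟨add⟩
instance : Zero DR := ⟨bot⟩
instance : Mul DR := ⟨mul⟩
instance : One DR := ⟨nb false 0⟩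

instance : AddCommMonoid DR where
  add := add
  add_assoc := add_assoc'
  zero := bot
  zero_add := bot_add
  add_zero := add_bot
  add_comm := add_comm'
  nsmul := nsmulRec

instance : CommMonoid DR where
  mul := mul
  mul_assoc := mul_assoc'
  one := nb false 0
  one_mul := one_mul'
  mul_one := fun x => by show mul x (nb false 0) = x; rw [mul_comm']; exact one_mul' x
  mul_comm := mul_comm'
  npow := npowRec

instance : CommSemiring DR where
  __ := (inferInstance : AddCommMonoid DR)
  __ := (inferInstance : CommMonoid DR)
  left_distrib := left_distrib'
  right_distrib := right_distrib'
  zero_mul := bot_mul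
  mul_zero := mul_bot

/-- The ghost ideal `G₀ = ℝ^ν ∪ {-∞}` as a predicate. -/
def IsGhost : DR → Prop
  | bot => True
  | nb b _ => b = true

/-- The tangible elements `T = ℝ` as a predicate. -/
def Tangible : DR → Prop
  | nb false _ => True
  | _ => False

/-- Membership in `T ∪ {-∞}`. -/
def TangibleOrBot (x : DR) : Prop := x = bot ∨ Tangible x

/-- The underlying value in `ℝ ∪ {-∞}`. -/
def val : DR → WithBot ℝ
  | bot => ⊥
  | nb _ r => (r : WithBot ℝ)

/-- `x ≤_ν y` : comparison of underlying values, `-∞` smallest. -/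
def nuLe (x y : DR) : Prop := val x ≤ val y

/-- `x <_ν y` : strict comparison of underlying values, `-∞` smallest. -/
def nuLt (x y : DR) : Prop := val x < val y

/-- The tangible lift `x̂` of `x` (with `hat bot = bot`). -/
def hat : DR → DR
  | bot => bot
  | nb _ r => nb false r

/-- The ghost map `ν`. -/
def nu : DR → DR
  | bot => bot
  | nb _ r => nb true r

/-- The ghost-surpass relation `x ⊨ y` on `D(ℝ)`. -/
def GhostSurp (x y : DR) : Prop := ∃ c : DR, IsGhost c ∧ x = y + c

end DR

open DR

/-- A vector in `D(ℝ)^(n)` lies in the ghost submodule `G₀^(n)`. -/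
def GhostVec {n : ℕ} (v : Fin n → DR) : Prop := ∀ j, IsGhost (v j)

/-- A tangible vector: all entries in `T ∪ {-∞}`. -/
def TangibleVec {n : ℕ} (v : Fin n → DR) : Prop := ∀ j, TangibleOrBot (v j)

/-- The ghost-surpass relation `v ⊨ w` on vectors. -/
def GhostSurpVec {n : ℕ} (v w : Fin n → DR) : Prop :=
  ∃ u : Fin n → DR, GhostVec u ∧ v = w + u

/-- A family of vectors is tropically dependent. -/
def TropDep {ι : Type*} [Fintype ι] {n : ℕ} (w : ι → Fin n → DR) : Prop :=
  ∃ I : Finset ι, I.Nonempty ∧ ∃ α : ι → DR, (∀ i ∈ I, Tangible (α i)) ∧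
    ∀ j : Fin n, IsGhost (∑ i ∈ I, α i * w i j)

/-- A family of vectors is tropically independent. -/
def TropIndep {ι : Type*} [Fintype ι] {n : ℕ} (w : ι → Fin n → DR) : Prop := ¬ TropDep w

/-- A set of vectors is tropically dependent. -/
def SetTropDep {n : ℕ} (S : Set (Fin n → DR)) : Prop :=
  ∃ I : Finset (Fin n → DR), ↑I ⊆ S ∧ I.Nonempty ∧
    ∃ α : (Fin n → DR) → DR, (∀ w ∈ I, Tangible (α w)) ∧
      ∀ j : Fin n, IsGhost (∑ w ∈ I, α w * w j)

/-- A set of vectors is tropically independent. -/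
def SetTropIndep {n : ℕ} (S : Set (Fin n → DR)) : Prop := ¬ SetTropDep S

/-- A d-base of `V`: a maximal tropically independent subset of `V`. -/
def IsDBase {n : ℕ} (V S : Set (Fin n → DR)) : Prop :=
  S ⊆ V ∧ SetTropIndep S ∧ ∀ S', S ⊆ S' → S' ⊆ V → SetTropIndep S' → S' = S

/-- The rank of `V`: the maximal number of elements of a d-base of `V`. -/
noncomputable def trank {n : ℕ} (V : Set (Fin n → DR)) : ℕ :=
  sSup {m | ∃ S, IsDBase V S ∧ S.Finite ∧ S.ncard = m}

/-- `v` is tropically spanned by `S`. -/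
def SpannedBy {n : ℕ} (S : Set (Fin n → DR)) (v : Fin n → DR) : Prop :=
  ∃ I : Finset (Fin n → DR), ↑I ⊆ S ∧ I.Nonempty ∧
    ∃ α : (Fin n → DR) → DR, (∀ w ∈ I, Tangible (α w)) ∧
      GhostSurpVec v (fun j => ∑ w ∈ I, α w * w j)

/-- The tropical determinant (permanent) of a square matrix over `D(ℝ)`. -/
noncomputable def tperm {k : ℕ} (A : Matrix (Fin k) (Fin k) DR) : DR :=
  ∑ π : Equiv.Perm (Fin k), ∏ i, A (π i) i

namespace DR

lemma val_add (x y : DR) : val (x + y) = max (val x) (val y) := by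
  show val (add x y) = _
  cases x with
  | bot => simp [add, val]
  | nb b r =>
    cases y with
    | bot => simp [add, val]
    | nb c s =>
      simp only [add, val]
      split_ifs with h1 h2
      · rw [max_eq_right]; exact_mod_cast h1.le
      · rw [max_eq_left]; exact_mod_cast h2.le
      · have : r = s := le_antisymm (not_lt.mp h2) (not_lt.mp h1)
        subst this; simp

lemma add_eq_left {x y : DR} (h : val y < val x) : x + y = x := by
  show add x y = x
  cases x with
  | bot => exact absurd h (by simp [val])
  | nb b r =>
    cases y with
    | bot => exact add_bot _
    | nb c s =>
      have hs : s < r := by simpa [val] using h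
      simp [add, hs, not_lt.mpr hs.le]

lemma add_eq_right {x y : DR} (h : val x < val y) : x + y = y := by
  rw [show x + y = add x y from rfl, add_comm']; exact add_eq_left h

lemma tangible_iff {x : DR} : Tangible x ↔ ∃ r : ℝ, x = nb false r := by
  cases x with
  | bot => simp [Tangible]
  | nb b r =>
    cases b
    · simp [Tangible]
    · simp [Tangible]

lemma not_tangible_of_ghost {x : DR} (h : IsGhost x) : ¬ Tangible x := by
  cases x with
  | bot => simp [Tangible]
  | nb b r => cases b
              · exact absurd h (by simp [IsGhost])
              · simp [Tangible]

lemma tangible_add {x y : DR} (h : Tangible (x + y)) :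
    (Tangible x ∧ val y < val x) ∨ (Tangible y ∧ val x < val y) := by
  have hxy : x + y = add x y := rfl
  cases x with
  | bot =>
    right
    refine ⟨by rwa [hxy, bot_add] at h, ?_⟩
    rw [hxy, bot_add] at h
    obtain ⟨r, rfl⟩ := tangible_iff.mp h
    simp [val]
  | nb b r =>
    cases y with
    | bot =>
      left
      rw [hxy, add_bot] at h
      exact ⟨h, by simp [val]⟩
    | nb c s =>
      rw [hxy] at h
      simp only [add] at h
      split_ifs at h with h1 h2
      · right; exact ⟨h, by simpa [val] using h1⟩
      · left; exact ⟨h, by simpa [val] using h2⟩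
      · exact absurd h (by simp [Tangible])

lemma val_zero : val (0 : DR) = ⊥ := rfl

lemma le_val_sum {ι : Type*} [DecidableEq ι] {s : Finset ι} {f : ι → DR} {j : ι} (hj : j ∈ s) :
    val (f j) ≤ val (∑ i ∈ s, f i) := by
  rw [← Finset.add_sum_erase _ f hj, val_add]
  exact le_max_left _ _

lemma val_sum_lt {ι : Type*} {s : Finset ι} {f : ι → DR} {c : ℝ}
    (h : ∀ j ∈ s, val (f j) < (c : WithBot ℝ)) : val (∑ i ∈ s, f i) < (c : WithBot ℝ) := by
  classical
  induction s using Finset.cons_induction with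
  | empty => simpa [val_zero] using WithBot.bot_lt_coe c
  | cons a s ha ih =>
    rw [Finset.sum_cons, val_add]
    exact max_lt (h a (Finset.mem_cons_self a s)) (ih fun j hj => h j (Finset.mem_cons_of_mem hj))

lemma exists_dominant {ι : Type*} {s : Finset ι} {f : ι → DR}
    (h : Tangible (∑ i ∈ s, f i)) :
    ∃ i ∈ s, Tangible (f i) ∧ (∀ j ∈ s, j ≠ i → val (f j) < val (f i)) ∧ f i = ∑ j ∈ s, f j := by
  classical
  induction s using Finset.cons_induction with
  | empty =>
    rw [Finset.sum_empty] at h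
    exact (show False from h).elim
  | cons a s ha ih =>
    rw [Finset.sum_cons] at h
    rcases tangible_add h with ⟨hta, hlt⟩ | ⟨hts, hlt⟩
    · refine ⟨a, Finset.mem_cons_self a s, hta, ?_, ?_⟩
      · intro j hj hne
        rcases Finset.mem_cons.mp hj with rfl | hjs
        · exact absurd rfl hne
        · exact lt_of_le_of_lt (le_val_sum hjs) hlt
      · rw [Finset.sum_cons]; exact (add_eq_left hlt).symm
    · obtain ⟨i, his, hti, hdom, heq⟩ := ih hts
      refine ⟨i, Finset.mem_cons_of_mem his, hti, ?_, ?_⟩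
      · intro j hj hne
        rcases Finset.mem_cons.mp hj with rfl | hjs
        · rw [heq]; exact hlt
        · exact hdom j hjs hne
      · rw [Finset.sum_cons, add_eq_right hlt]; exact heq

lemma sum_eq_of_dominant {ι : Type*} [DecidableEq ι] {s : Finset ι} {f : ι → DR} {i₀ : ι}
    (hi : i₀ ∈ s) {r : ℝ} (hr : f i₀ = nb false r)
    (hdom : ∀ j ∈ s, j ≠ i₀ → val (f j) < val (f i₀)) : ∑ j ∈ s, f j = f i₀ := by
  rw [← Finset.add_sum_erase _ f hi]
  apply add_eq_left
  have hv : val (f i₀) = (r : WithBot ℝ) := by rw [hr]; rfl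
  rw [hv]
  exact val_sum_lt fun j hj =>
    hv ▸ hdom j (Finset.mem_of_mem_erase hj) (Finset.ne_of_mem_erase hj)

lemma exists_ge_of_ghost {ι : Type*} [DecidableEq ι] {s : Finset ι} {f : ι → DR} {i₀ : ι}
    (hg : IsGhost (∑ j ∈ s, f j)) (hi : i₀ ∈ s) (ht : Tangible (f i₀)) :
    ∃ j ∈ s, j ≠ i₀ ∧ val (f i₀) ≤ val (f j) := by
  by_contra hc
  push_neg at hc
  obtain ⟨r, hr⟩ := tangible_iff.mp ht
  have hsum := sum_eq_of_dominant hi hr (fun j hj hne => hc j hj hne)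
  rw [hsum] at hg
  exact not_tangible_of_ghost hg ht

lemma tangible_mul {x y : DR} (hx : Tangible x) (hy : Tangible y) : Tangible (x * y) := by
  obtain ⟨r, rfl⟩ := tangible_iff.mp hx
  obtain ⟨s, rfl⟩ := tangible_iff.mp hy
  show Tangible (mul _ _)
  simp [mul, Tangible]

lemma tangible_of_mul {x y : DR} (h : Tangible (x * y)) : Tangible x ∧ Tangible y := by
  have hxy : x * y = mul x y := rfl
  cases x with
  | bot => rw [hxy, bot_mul] at h; exact absurd h (by simp [Tangible])
  | nb b r =>
    cases y with
    | bot => rw [hxy, mul_bot] at h; exact absurd h (by simp [Tangible])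
    | nb c s =>
      rw [hxy] at h
      simp only [mul] at h
      have : (b || c) = false := by
        cases hbc : b || c
        · rfl
        · rw [hbc] at h; exact absurd h (by simp [Tangible])
      rcases Bool.or_eq_false_iff.mp this with ⟨hb, hc⟩
      subst hb; subst hc
      exact ⟨trivial, trivial⟩

lemma val_mul (x y : DR) : val (x * y) = val x + val y := by
  show val (mul x y) = _
  cases x with
  | bot => simp [mul, val]
  | nb b r =>
    cases y with
    | bot => simp [mul, val]
    | nb c s => simp [mul, val]

lemma prod_tangible {ι : Type*} {s : Finset ι} {f : ι → DR}
    (h : Tangible (∏ i ∈ s, f i)) : ∀ i ∈ s, Tangible (f i) := by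
  classical
  induction s using Finset.cons_induction with
  | empty => simp
  | cons a s ha ih =>
    rw [Finset.prod_cons] at h
    obtain ⟨h1, h2⟩ := tangible_of_mul h
    intro i hi
    rcases Finset.mem_cons.mp hi with rfl | his
    · exact h1
    · exact ih h2 i his

lemma val_prod {ι : Type*} {s : Finset ι} (f : ι → DR) :
    val (∏ i ∈ s, f i) = ∑ i ∈ s, val (f i) := by
  classical
  induction s using Finset.cons_induction with
  | empty => simp [val, Finset.prod_empty, Finset.sum_empty]
  | cons a s ha ih => rw [Finset.prod_cons, Finset.sum_cons, val_mul, ih]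

end DR

lemma exists_cycle_perm {n : ℕ} (hn : 0 < n) (h : Fin n → Fin n) (hh : ∀ j, h j ≠ j) :
    ∃ (O : Finset (Fin n)) (π : Equiv.Perm (Fin n)),
      (∀ i ∈ O, π i = h i) ∧ (∀ i ∉ O, π i = i) ∧ (∀ i ∈ O, π i ∈ O) ∧ π ≠ 1 := by
  classical
  set x0 : Fin n := ⟨0, hn⟩ with hx0
  obtain ⟨a, b, hab, heq⟩ := Fintype.exists_ne_map_eq_of_card_lt
      (fun t : Fin (n + 1) => h^[(t : ℕ)] x0) (by simp)
  -- WLOG a < b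
  wlog hlt : (a : ℕ) < (b : ℕ) generalizing a b
  · exact this b a hab.symm heq.symm
      (lt_of_le_of_ne (not_lt.mp hlt) (fun hc => hab (Fin.ext hc.symm)))
  set p : Fin n := h^[(a : ℕ)] x0 with hp
  have hper : h^[(b : ℕ) - (a : ℕ)] p = p := by
    rw [hp, ← Function.iterate_add_apply]
    rw [show (b : ℕ) - (a : ℕ) + (a : ℕ) = (b : ℕ) by omega]
    exact heq.symm
  have hex : ∃ m : ℕ, 0 < m ∧ h^[m] p = p := ⟨(b : ℕ) - (a : ℕ), by omega, hper⟩
  set m := Nat.find hex with hm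
  obtain ⟨hm0, hmp⟩ : 0 < m ∧ h^[m] p = p := Nat.find_spec hex
  have hmin : ∀ k, 0 < k → h^[k] p = p → m ≤ k := fun k hk1 hk2 => Nat.find_le ⟨hk1, hk2⟩
  -- injectivity of iterates below m
  have inj_lt : ∀ u v, u < m → v < m → h^[u] p = h^[v] p → u = v := by
    have key : ∀ u v, u ≤ v → u < m → v < m → h^[u] p = h^[v] p → u = v := by
      intro u v huv hu hv he
      by_contra hne
      have huv' : u < v := lt_of_le_of_ne huv hne
      have e1 : h^[m - v + u] p = h^[m - v] (h^[u] p) := Function.iterate_add_apply h _ _ _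
      have e2 : h^[m - v + v] p = h^[m - v] (h^[v] p) := Function.iterate_add_apply h _ _ _
      have e3 : m - v + v = m := by omega
      have : h^[m - v + u] p = p := by
        rw [e1, he, ← e2, e3, hmp]
      have := hmin _ (by omega) this
      omega
    intro u v hu hv he
    rcases le_total u v with huv | huv
    · exact key u v huv hu hv he
    · exact (key v u huv hv hu he.symm).symm
  set O : Finset (Fin n) := (Finset.range m).image (fun t => h^[t] p) with hO
  have hpO : p ∈ O := by
    rw [hO]
    exact Finset.mem_image.mpr ⟨0, Finset.mem_range.mpr hm0, rfl⟩
  have hmaps : ∀ i ∈ O, h i ∈ O := by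
    intro i hi
    rw [hO, Finset.mem_image] at hi ⊢
    obtain ⟨t, ht, rfl⟩ := hi
    rw [Finset.mem_range] at ht
    rcases Nat.lt_or_ge (t + 1) m with h1 | h1
    · exact ⟨t + 1, Finset.mem_range.mpr h1, Function.iterate_succ_apply' h t p⟩
    · have ht1 : t + 1 = m := by omega
      refine ⟨0, Finset.mem_range.mpr hm0, ?_⟩
      have hstep := hmp
      rw [← ht1, Function.iterate_succ_apply'] at hstep
      rw [Function.iterate_zero_apply, hstep]
  have hinjO : ∀ i ∈ O, ∀ i' ∈ O, h i = h i' → i = i' := by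
    intro i hi i' hi' he
    rw [hO, Finset.mem_image] at hi hi'
    obtain ⟨u, hu, rfl⟩ := hi
    obtain ⟨v, hv, rfl⟩ := hi'
    rw [Finset.mem_range] at hu hv
    rw [← Function.iterate_succ_apply' h u p, ← Function.iterate_succ_apply' h v p] at he
    have key' : ∀ u v : ℕ, u ≤ v → u < m → v < m → h^[u + 1] p = h^[v + 1] p → u = v := by
      intro u v huv hu hv he
      by_contra hne
      have huv' : u < v := lt_of_le_of_ne huv hne
      have e1 : h^[m - (v + 1) + (u + 1)] p = h^[m - (v + 1)] (h^[u + 1] p) :=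
        Function.iterate_add_apply h _ _ _
      have e2 : h^[m - (v + 1) + (v + 1)] p = h^[m - (v + 1)] (h^[v + 1] p) :=
        Function.iterate_add_apply h _ _ _
      have e3 : m - (v + 1) + (v + 1) = m := by omega
      have hpp : h^[m - (v + 1) + (u + 1)] p = p := by rw [e1, he, ← e2, e3, hmp]
      have := hmin _ (by omega) hpp
      omega
    have : u = v := by
      rcases le_total u v with huv | huv
      · exact key' u v huv hu hv he
      · exact (key' v u huv hv hu he.symm).symm
    rw [this]
  -- the permutation
  set g : Fin n → Fin n := fun i => if i ∈ O then h i else i with hg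
  have hginj : Function.Injective g := by
    intro i i' he
    rw [hg] at he
    simp only at he
    by_cases hi : i ∈ O <;> by_cases hi' : i' ∈ O
    · rw [if_pos hi, if_pos hi'] at he; exact hinjO i hi i' hi' he
    · rw [if_pos hi, if_neg hi'] at he; exact absurd (he ▸ hmaps i hi) hi'
    · rw [if_neg hi, if_pos hi'] at he; exact absurd (he ▸ hmaps i' hi') hi
    · rwa [if_neg hi, if_neg hi'] at he
  have hgbij : Function.Bijective g := Finite.injective_iff_bijective.mp hginj
  refine ⟨O, Equiv.ofBijective g hgbij, ?_, ?_, ?_, ?_⟩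
  · intro i hi
    show g i = h i
    rw [hg]; simp only [if_pos hi]
  · intro i hi
    show g i = i
    rw [hg]; simp only [if_neg hi]
  · intro i hi
    show g i ∈ O
    rw [hg]; simp only [if_pos hi]; exact hmaps i hi
  · intro hc
    have h1 : Equiv.ofBijective g hgbij p = p := by rw [hc]; rfl
    rw [Equiv.ofBijective_apply, hg] at h1
    simp only [if_pos hpO] at h1
    exact hh p h1

lemma wb_add_lt {a c : WithBot ℝ} {b d : ℝ} (h1 : a < (b : WithBot ℝ)) (h2 : c < (d : WithBot ℝ)) :
    a + c < ((b + d : ℝ) : WithBot ℝ) := by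
  induction a using WithBot.recBotCoe with
  | bot => rw [WithBot.bot_add]; exact WithBot.bot_lt_coe _
  | coe a =>
    induction c using WithBot.recBotCoe with
    | bot => rw [WithBot.add_bot]; exact WithBot.bot_lt_coe _
    | coe c =>
      have ha : a < b := WithBot.coe_lt_coe.mp h1
      have hc : c < d := WithBot.coe_lt_coe.mp h2
      rw [← WithBot.coe_add, WithBot.coe_lt_coe]
      linarith

lemma main_aux {n : ℕ} (hn : 0 < n) (A B : Matrix (Fin n) (Fin n) DR)
    (hAt : Tangible (∏ i, A i i)) (hBt : Tangible (∏ i, B i i))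
    (hAd : ∀ π : Equiv.Perm (Fin n), π ≠ 1 → val (∏ i, A (π i) i) < val (∏ i, A i i))
    (hBd : ∀ π : Equiv.Perm (Fin n), π ≠ 1 → val (∏ i, B (π i) i) < val (∏ i, B i i))
    (hG : ∀ i j, IsGhost ((A * B) i j)) : False := by
  classical
  have hAii : ∀ i, Tangible (A i i) := fun i => prod_tangible hAt i (Finset.mem_univ i)
  have hBii : ∀ i, Tangible (B i i) := fun i => prod_tangible hBt i (Finset.mem_univ i)
  have hex : ∀ j : Fin n, ∃ kk, kk ≠ j ∧ val (A j j * B j j) ≤ val (A j kk * B kk j) := by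
    intro j
    have hg : IsGhost (∑ kk, A j kk * B kk j) := by
      have := hG j j
      rwa [Matrix.mul_apply] at this
    obtain ⟨kk, _, hkj, hle⟩ := exists_ge_of_ghost hg (Finset.mem_univ j)
      (tangible_mul (hAii j) (hBii j))
    exact ⟨kk, hkj, hle⟩
  choose k hk1 hk2 using hex
  obtain ⟨O, π, hπO, hπfix, hπmaps, hπne⟩ := exists_cycle_perm hn k hk1
  obtain ⟨rA, hrA⟩ := tangible_iff.mp hAt
  obtain ⟨rB, hrB⟩ := tangible_iff.mp hBt
  have hvA : val (∏ i, A i i) = (rA : WithBot ℝ) := by rw [hrA]; rfl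
  have hvB : val (∏ i, B i i) = (rB : WithBot ℝ) := by rw [hrB]; rfl
  have hπinvne : π⁻¹ ≠ 1 := fun hcc => hπne (by rw [← inv_inv π, hcc, inv_one])
  have hLA : val (∏ i, A (π⁻¹ i) i) < (rA : WithBot ℝ) := by
    rw [← hvA]; exact hAd π⁻¹ hπinvne
  have hLB : val (∏ i, B (π i) i) < (rB : WithBot ℝ) := by rw [← hvB]; exact hBd π hπne
  have hstrict : val (∏ i, A (π⁻¹ i) i) + val (∏ i, B (π i) i) < ((rA + rB : ℝ) : WithBot ℝ) :=
    wb_add_lt hLA hLB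
  -- the reverse (≥) inequality
  have hfixinv : ∀ i ∉ O, π⁻¹ i = i := by
    intro i hi
    have h1 := hπfix i hi
    have h2 : π⁻¹ (π i) = π⁻¹ i := congrArg _ h1
    rw [Equiv.Perm.inv_def, Equiv.symm_apply_apply] at h2
    exact h2.symm
  set DA : WithBot ℝ := ∑ i ∈ Finset.univ \ O, val (A i i) with hDA
  set DB : WithBot ℝ := ∑ i ∈ Finset.univ \ O, val (B i i) with hDB
  have e1 : (∑ i, val (A i i)) = DA + ∑ j ∈ O, val (A j j) :=
    (Finset.sum_sdiff (Finset.subset_univ O)).symm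
  have e2 : (∑ i, val (B i i)) = DB + ∑ j ∈ O, val (B j j) :=
    (Finset.sum_sdiff (Finset.subset_univ O)).symm
  have hsupp : {a | π a ≠ a} ⊆ ↑O := by
    intro a ha
    by_contra hc
    exact ha (hπfix a (by simpa using hc))
  have hreA : ∑ i ∈ O, val (A (π⁻¹ i) i) = ∑ j ∈ O, val (A j (π j)) := by
    rw [← Equiv.Perm.sum_comp π O (fun i => val (A (π⁻¹ i) i)) hsupp]
    exact Finset.sum_congr rfl fun j _ => by rw [Equiv.Perm.inv_def, Equiv.symm_apply_apply]
  have e3 : (∑ i, val (A (π⁻¹ i) i)) = DA + ∑ j ∈ O, val (A j (π j)) := by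
    rw [← Finset.sum_sdiff (Finset.subset_univ O) (f := fun i => val (A (π⁻¹ i) i)), ← hreA]
    congr 1
    exact Finset.sum_congr rfl fun i hi => by
      rw [hfixinv i (Finset.mem_sdiff.mp hi).2]
  have e4 : (∑ i, val (B (π i) i)) = DB + ∑ j ∈ O, val (B (π j) j) := by
    rw [← Finset.sum_sdiff (Finset.subset_univ O) (f := fun i => val (B (π i) i))]
    congr 1
    exact Finset.sum_congr rfl fun i hi => by
      rw [hπfix i (Finset.mem_sdiff.mp hi).2]
  have hpt : ∀ j ∈ O, val (A j j) + val (B j j) ≤ val (A j (π j)) + val (B (π j) j) := by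
    intro j hj
    have h1 := hk2 j
    rw [val_mul, val_mul] at h1
    rwa [hπO j hj]
  have hO1 : (∑ j ∈ O, val (A j j)) + ∑ j ∈ O, val (B j j) ≤
      (∑ j ∈ O, val (A j (π j))) + ∑ j ∈ O, val (B (π j) j) := by
    rw [← Finset.sum_add_distrib, ← Finset.sum_add_distrib]
    exact Finset.sum_le_sum hpt
  have hfinal : ((rA + rB : ℝ) : WithBot ℝ) ≤
      val (∏ i, A (π⁻¹ i) i) + val (∏ i, B (π i) i) := by
    rw [val_prod, val_prod, e3, e4, WithBot.coe_add, ← hvA, ← hvB, val_prod, val_prod, e1, e2]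
    calc DA + ∑ j ∈ O, val (A j j) + (DB + ∑ j ∈ O, val (B j j))
        = DA + DB + ((∑ j ∈ O, val (A j j)) + ∑ j ∈ O, val (B j j)) := by abel
      _ ≤ DA + DB + ((∑ j ∈ O, val (A j (π j))) + ∑ j ∈ O, val (B (π j) j)) :=
          add_le_add_right hO1 _
      _ = DA + ∑ j ∈ O, val (A j (π j)) + (DB + ∑ j ∈ O, val (B (π j) j)) := by abel
  exact absurd hfinal (not_le.mpr hstrict)

/-- The product of two nonsingular matrices over `D(ℝ)` cannot lie in `M_n(G₀)`:
some entry of `A * B` is not a ghost. -/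
theorem product_of_nonsingular_not_ghost (n : ℕ) (hn : 0 < n)
    (A B : Matrix (Fin n) (Fin n) DR)
    (hA : Tangible (tperm A)) (hB : Tangible (tperm B)) :
    ∃ i j, ¬ IsGhost ((A * B) i j) := by
  classical
  by_contra hc
  simp only [not_exists, not_not] at hc
  have hA' : Tangible (∑ π : Equiv.Perm (Fin n), ∏ i, A (π i) i) := hA
  have hB' : Tangible (∑ π : Equiv.Perm (Fin n), ∏ i, B (π i) i) := hB
  obtain ⟨σ, -, hσt, hσd, -⟩ := exists_dominant hA'
  obtain ⟨τ, -, hτt, hτd, -⟩ := exists_dominant hB'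
  set A' : Matrix (Fin n) (Fin n) DR := Matrix.of (fun i kk => A (σ (τ i)) (τ kk)) with hA'def
  set B' : Matrix (Fin n) (Fin n) DR := Matrix.of (fun kk j => B (τ kk) j) with hB'def
  have hprodA : (∏ i, A' i i) = ∏ i, A (σ i) i := Equiv.prod_comp τ (fun i => A (σ i) i)
  have hprodB : (∏ i, B' i i) = ∏ i, B (τ i) i := rfl
  refine main_aux hn A' B' ?_ ?_ ?_ ?_ ?_
  · rw [hprodA]; exact hσt
  · rw [hprodB]; exact hτt
  · intro π hπ
    set ρ : Equiv.Perm (Fin n) := σ * τ * π * τ⁻¹ with hρdef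
    have hρ : ρ ≠ σ := by
      intro hc2
      apply hπ
      have : π = τ⁻¹ * (σ⁻¹ * ρ) * τ := by rw [hρdef]; group
      rw [hc2] at this
      rw [this]; group
    have h1 : (∏ i, A' (π i) i) = ∏ i, A (ρ i) i := by
      rw [← Equiv.prod_comp τ (fun i => A (ρ i) i)]
      refine Finset.prod_congr rfl fun i _ => ?_
      show A (σ (τ (π i))) (τ i) = A (ρ (τ i)) (τ i)
      rw [hρdef]
      simp [Equiv.Perm.mul_apply]
    rw [h1, hprodA]
    exact hσd ρ (Finset.mem_univ ρ) hρ
  · intro π hπ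
    have hτπ : τ * π ≠ τ := by
      intro hc2
      exact hπ (mul_left_cancel (a := τ) (by rw [hc2, mul_one]))
    have h1 : (∏ i, B' (π i) i) = ∏ i, B ((τ * π) i) i := rfl
    rw [h1, hprodB]
    exact hτd (τ * π) (Finset.mem_univ _) hτπ
  · intro i j
    have h1 : (A' * B') i j = (A * B) (σ (τ i)) j := by
      rw [Matrix.mul_apply, Matrix.mul_apply]
      exact Equiv.sum_comp τ (fun kk => A (σ (τ i)) kk * B kk j)
    rw [h1]
    exact hc _ _
end
end

section
/- Let A be an n×n matrix over D(ℝ) whose maximal number of tropically independent rows is m. Then there exist n−m tropically independent tangible vectors u₁, …, u_{n−m} ∈ D(ℝ)^(n) such that each uⱼ g-annihilates A on the left, i.e., the row vector uⱼ · A lies in G₀^(n). -/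
noncomputable section

open DR

lemma not_ghost_mul_tangible {x y : DR} (hx : Tangible x) (hy : Tangible y) :
    ¬ IsGhost (x * y) := by
  cases x with
  | bot => exact hx.elim
  | nb b r =>
    cases y with
    | bot => exact hy.elim
    | nb c s =>
      cases b
      · cases c
        · show ¬ IsGhost (mul _ _)
          simp [DR.mul, IsGhost]
        · exact hy.elim
      · exact hx.elim

/-- Transfer a tropical dependence on a subtype family to data on `Fin n`. -/
lemma exists_of_tropDep {n : ℕ} (A : Matrix (Fin n) (Fin n) DR) (s : Finset (Fin n))
    (h : TropDep (fun i : s => A i.1)) :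
    ∃ I : Finset (Fin n), I ⊆ s ∧ I.Nonempty ∧ ∃ α : Fin n → DR,
      (∀ k ∈ I, Tangible (α k)) ∧ ∀ c, IsGhost (∑ k ∈ I, α k * A k c) := by
  obtain ⟨I, hne, α, htan, hg⟩ := h
  refine ⟨I.map (Function.Embedding.subtype _), ?_, hne.map,
    fun k => if h : k ∈ s then α ⟨k, h⟩ else 0, ?_, ?_⟩
  · intro k hk
    simp only [Finset.mem_map, Function.Embedding.coe_subtype] at hk
    obtain ⟨x, _, rfl⟩ := hk
    exact x.2
  · intro k hk
    simp only [Finset.mem_map, Function.Embedding.coe_subtype] at hk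
    obtain ⟨x, hx, rfl⟩ := hk
    simpa only [dif_pos x.2] using htan _ hx
  · intro c
    rw [Finset.sum_map]
    convert hg c using 1
    refine Finset.sum_congr rfl fun x _ => ?_
    simp only [Function.Embedding.coe_subtype, dif_pos x.2]
    simp [x.2]

/-- Build a tropical dependence on a subtype family from data on `Fin n`. -/
lemma tropDep_of {n : ℕ} (A : Matrix (Fin n) (Fin n) DR) (s : Finset (Fin n))
    (I : Finset (Fin n)) (hIs : I ⊆ s) (hne : I.Nonempty) (α : Fin n → DR)
    (htan : ∀ k ∈ I, Tangible (α k)) (hg : ∀ c, IsGhost (∑ k ∈ I, α k * A k c)) :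
    TropDep (fun i : s => A i.1) := by
  refine ⟨I.attach.map ⟨fun x => (⟨x.1, hIs x.2⟩ : {y // y ∈ s}),
    fun a b hab => Subtype.ext (by simpa using hab)⟩,
    (hne.attach).map, fun x => α x.1, ?_, ?_⟩
  · intro w hw
    simp only [Finset.mem_map, Function.Embedding.coeFn_mk] at hw
    obtain ⟨x, _, rfl⟩ := hw
    exact htan _ x.2
  · intro c
    rw [Finset.sum_map]
    simp only [Function.Embedding.coeFn_mk]
    show IsGhost (∑ x ∈ I.attach, α x.1 * A x.1 c)
    rw [Finset.sum_attach I (fun k => α k * A k c)]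
    exact hg c

/-- If the maximal number of tropically independent rows of an `n × n` matrix `A`
is `m`, then its left g-annihilator contains `n - m` tropically independent
tangible vectors. -/
theorem annihilator_of_matrix_has_rank (n m : ℕ) (A : Matrix (Fin n) (Fin n) DR)
    (h1 : ∃ s : Finset (Fin n), s.card = m ∧ TropIndep (fun i : s => A i.1))
    (h2 : ∀ s : Finset (Fin n), m < s.card → TropDep (fun i : s => A i.1)) :
    ∃ u : Fin (n - m) → Fin n → DR, (∀ j, TangibleVec (u j)) ∧ TropIndep u ∧
      ∀ j c, IsGhost (∑ i, u j i * A i c) := by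
  obtain ⟨s, hcard, hindep⟩ := h1
  have hcompl : sᶜ.card = n - m := by
    rw [Finset.card_compl, hcard, Fintype.card_fin]
  set e := sᶜ.equivFinOfCardEq hcompl with he
  set c : Fin (n - m) → Fin n := fun j => (e.symm j).1 with hc
  have hcs : ∀ j, c j ∉ s := fun j => Finset.mem_compl.mp (e.symm j).2
  have hcinj : Function.Injective c := fun a b hab => by
    have := Subtype.ext hab
    simpa using e.symm.injective this
  -- dependence data for each `insert (c j) s`
  have hdep : ∀ j : Fin (n - m), ∃ I : Finset (Fin n), I ⊆ insert (c j) s ∧ I.Nonempty ∧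
      ∃ α : Fin n → DR, (∀ k ∈ I, Tangible (α k)) ∧
        ∀ col, IsGhost (∑ k ∈ I, α k * A k col) := by
    intro j
    refine exists_of_tropDep A _ (h2 _ ?_)
    rw [Finset.card_insert_of_notMem (hcs j), hcard]
    exact Nat.lt_succ_self m
  choose I hIsub hIne α hαtan hαg using hdep
  have hmem : ∀ j, c j ∈ I j := by
    intro j
    by_contra hcj
    have hsub : I j ⊆ s := by
      intro k hk
      rcases Finset.mem_insert.mp (hIsub j hk) with h | h
      · exact absurd (h ▸ hk) hcj
      · exact h
    exact hindep (tropDep_of A s (I j) hsub (hIne j) (α j) (hαtan j) (hαg j))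
  set u : Fin (n - m) → Fin n → DR := fun j k => if k ∈ I j then α j k else 0 with hu
  refine ⟨u, ?_, ?_, ?_⟩
  · intro j k
    by_cases hk : k ∈ I j
    · right
      simp only [hu, if_pos hk]
      exact hαtan j k hk
    · left
      simp only [hu, if_neg hk]
      rfl
  · rintro ⟨J, hJne, β, hβtan, hg⟩
    obtain ⟨j₀, hj₀⟩ := hJne
    have key : (∑ j ∈ J, β j * u j (c j₀)) = β j₀ * u j₀ (c j₀) := by
      refine Finset.sum_eq_single_of_mem j₀ hj₀ fun j _ hjne => ?_
      have hnot : c j₀ ∉ I j := by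
        intro hin
        rcases Finset.mem_insert.mp (hIsub j hin) with h | h
        · exact hjne (hcinj h.symm)
        · exact hcs j₀ h
      simp only [hu, if_neg hnot, mul_zero]
    have := hg (c j₀)
    rw [key] at this
    have hu0 : u j₀ (c j₀) = α j₀ (c j₀) := by simp only [hu, if_pos (hmem j₀)]
    rw [hu0] at this
    exact not_ghost_mul_tangible (hβtan j₀ hj₀) (hαtan j₀ _ (hmem j₀)) this
  · intro j col
    have : (∑ i, u j i * A i col) = ∑ k ∈ I j, α j k * A k col := by
      rw [← Finset.sum_subset (Finset.subset_univ (I j))]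
      · exact Finset.sum_congr rfl fun k hk => by simp only [hu, if_pos hk]
      · intro k _ hk
        simp only [hu, if_neg hk, zero_mul]
    rw [this]
    exact hαg j col
end
end

section
/- Let v, w₁, …, w_ℓ ∈ D(ℝ)^(n) and let α₁,…,α_ℓ and β₁,…,β_ℓ be elements of T ∪ {-∞} such that v + ∑ᵢ αᵢwᵢ ∈ G₀^(n) and v + ∑ᵢ βᵢwᵢ ∈ G₀^(n). Setting γᵢ to be the tangible lift of αᵢ + βᵢ (i.e., γᵢ = x̂ where x = αᵢ + βᵢ, and γᵢ = -∞ if αᵢ = βᵢ = -∞), one also has v + ∑ᵢ γᵢwᵢ ∈ G₀^(n). -/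
noncomputable section

open DR

namespace DRAux
open DR

lemma add_def (x y : DR) : x + y = DR.add x y := rfl
lemma mul_def (x y : DR) : x * y = DR.mul x y := rfl
lemma zero_def : (0 : DR) = DR.bot := rfl

lemma val_add (x y : DR) : val (x + y) = max (val x) (val y) := by
  rw [add_def]
  cases x <;> cases y <;> simp only [DR.add, val]
  · simp
  · simp
  · simp
  · rename_i b r c s
    split_ifs with h1 h2 <;> simp only [val]
    · rw [max_eq_right]; exact_mod_cast h1.le
    · rw [max_eq_left]; exact_mod_cast h2.le
    · have : r = s := le_antisymm (not_lt.1 h2) (not_lt.1 h1)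
      subst this; simp

lemma ghost_add_iff (x y : DR) :
    IsGhost (x + y) ↔ (val y < val x → IsGhost x) ∧ (val x < val y → IsGhost y) := by
  rw [add_def]
  cases x <;> cases y <;> simp only [DR.add, IsGhost, val]
  · simp
  · simp
  · simp
  · rename_i b r c s
    rcases lt_trichotomy r s with h | h | h
    · rw [if_pos h]
      simp only [IsGhost]
      constructor
      · intro hc
        refine ⟨fun hlt => absurd (WithBot.coe_lt_coe.1 hlt) (not_lt.2 h.le), fun _ => hc⟩
      · intro ⟨_, h2⟩; exact h2 (by exact_mod_cast h)
    · subst h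
      rw [if_neg (lt_irrefl r), if_neg (lt_irrefl r)]
      simp [IsGhost]
    · rw [if_neg (not_lt.2 h.le), if_pos h]
      simp only [IsGhost]
      constructor
      · intro hb
        refine ⟨fun _ => hb, fun hlt => absurd (WithBot.coe_lt_coe.1 hlt) (not_lt.2 h.le)⟩
      · intro ⟨h1, _⟩; exact h1 (by exact_mod_cast h)

lemma ghost_add_of_eq {x y : DR} (h : val x = val y) : IsGhost (x + y) :=
  (ghost_add_iff x y).2 ⟨fun hlt => absurd h hlt.ne', fun hlt => absurd h hlt.ne⟩

lemma add_eq_left {x y : DR} (h : val y < val x) : x + y = x := by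
  rw [add_def]
  cases x with
  | bot => simp [val] at h
  | nb b r =>
    cases y with
    | bot => rfl
    | nb c s =>
      have hsr : s < r := by
        simpa [val, WithBot.coe_lt_coe] using h
      simp only [DR.add, if_neg (not_lt.2 hsr.le), if_pos hsr]

lemma val_zero : val (0 : DR) = ⊥ := rfl

lemma val_sum {ι : Type*} (s : Finset ι) (f : ι → DR) :
    val (∑ i ∈ s, f i) = s.sup (fun i => val (f i)) := by
  induction s using Finset.cons_induction with
  | empty => simp [val_zero]
  | cons a s ha ih => rw [Finset.sum_cons, Finset.sup_cons, val_add, ih]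

lemma sum_eq_dominant {ι : Type*} [DecidableEq ι] (s : Finset ι) (f : ι → DR) (i : ι)
    (hi : i ∈ s) (hbot : val (f i) ≠ ⊥) (hdom : ∀ k ∈ s, k ≠ i → val (f k) < val (f i)) :
    ∑ k ∈ s, f k = f i := by
  rw [← Finset.add_sum_erase s f hi]
  have hlt : val (∑ k ∈ s.erase i, f k) < val (f i) := by
    rw [val_sum]
    refine (Finset.sup_lt_iff (Ne.bot_lt hbot)).2 fun k hk => ?_
    exact hdom k (Finset.mem_of_mem_erase hk) (Finset.ne_of_mem_erase hk)
  exact add_eq_left hlt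

lemma sum_structure {ι : Type*} (s : Finset ι) (f : ι → DR) :
    IsGhost (∑ k ∈ s, f k) ∨
      ∃ i ∈ s, f i = ∑ k ∈ s, f k ∧ ∀ k ∈ s, k ≠ i → val (f k) < val (f i) := by
  induction s using Finset.cons_induction with
  | empty => left; exact trivial
  | cons a s ha ih =>
    rw [Finset.sum_cons]
    rcases lt_trichotomy (val (f a)) (val (∑ k ∈ s, f k)) with h | h | h
    · have heq : f a + ∑ k ∈ s, f k = ∑ k ∈ s, f k := by
        rw [add_comm]; exact add_eq_left h
      rcases ih with hg | ⟨i, hi, hieq, hdom⟩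
      · left; rw [heq]; exact hg
      · right
        refine ⟨i, Finset.mem_cons_of_mem hi, by rw [heq, ← hieq], fun k hk hki => ?_⟩
        rcases Finset.mem_cons.1 hk with rfl | hk'
        · rw [hieq]; exact h
        · exact hdom k hk' hki
    · left
      exact ghost_add_of_eq h
    · right
      refine ⟨a, Finset.mem_cons_self a s, (add_eq_left h).symm, fun k hk hka => ?_⟩
      rcases Finset.mem_cons.1 hk with rfl | hk'
      · exact absurd rfl hka
      · calc val (f k) ≤ val (∑ k ∈ s, f k) := by
              rw [val_sum]; exact Finset.le_sup (f := fun i => val (f i)) hk'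
          _ < val (f a) := h

lemma val_hat_mul_le (a b x : DR) : val (a * x) ≤ val (DR.hat (a + b) * x) := by
  rw [add_def, mul_def, mul_def]
  cases a <;> cases b <;> cases x <;>
    simp only [DR.add, DR.mul, DR.hat, val, le_refl, bot_le] <;>
    split_ifs <;>
    first
      | exact le_refl _
      | exact bot_le
      | exact WithBot.coe_le_coe.2 (by linarith)

lemma key (a b x : DR) (ha : TangibleOrBot a) (hb : TangibleOrBot b) :
    IsGhost (DR.hat (a + b) * x) ∨
      (DR.hat (a + b) * x = a * x ∧ DR.hat (a + b) * x = b * x) ∨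
      (DR.hat (a + b) * x = a * x ∧ val (b * x) < val (a * x)) ∨
      (DR.hat (a + b) * x = b * x ∧ val (a * x) < val (b * x)) := by
  rw [add_def, mul_def, mul_def, mul_def]
  cases a with
  | bot =>
    cases b with
    | bot => left; cases x <;> exact trivial
    | nb c s =>
      rcases hb with hb | hb
      · exact absurd hb (by simp)
      · cases c
        · cases x with
          | bot => left; rw [DR.mul_bot]; exact trivial
          | nb d t =>
            exact Or.inr (Or.inr (Or.inr ⟨rfl, WithBot.bot_lt_coe _⟩))
        · exact absurd hb (by simp [Tangible])
  | nb bb r =>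
    rcases ha with ha | ha
    · exact absurd ha (by simp)
    cases bb
    case true => exact absurd ha (by simp [Tangible])
    case false =>
    cases b with
    | bot =>
      cases x with
      | bot => left; rw [DR.mul_bot]; exact trivial
      | nb d t =>
        exact Or.inr (Or.inr (Or.inl ⟨rfl, WithBot.bot_lt_coe _⟩))
    | nb c s =>
      rcases hb with hb | hb
      · exact absurd hb (by simp)
      cases c
      case true => exact absurd hb (by simp [Tangible])
      case false =>
      cases x with
      | bot => left; rw [DR.mul_bot]; exact trivial
      | nb d t =>
        simp only [DR.add]
        rcases lt_trichotomy r s with h | h | h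
        · rw [if_pos h]
          exact Or.inr (Or.inr (Or.inr ⟨rfl, WithBot.coe_lt_coe.2 (by linarith)⟩))
        · subst h
          rw [if_neg (lt_irrefl r), if_neg (lt_irrefl r)]
          exact Or.inr (Or.inl ⟨rfl, rfl⟩)
        · rw [if_neg (not_lt.2 h.le), if_pos h]
          exact Or.inr (Or.inr (Or.inl ⟨rfl, WithBot.coe_lt_coe.2 (by linarith)⟩))

end DRAux

open DRAux in

/-- If `v + ∑ αᵢ wᵢ` and `v + ∑ βᵢ wᵢ` are both ghost, then so is
`v + ∑ γᵢ wᵢ` where `γᵢ` is the tangible lift of `αᵢ + βᵢ`. -/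
theorem tangible_lift_of_sum_is_dependence (n l : ℕ) (v : Fin n → DR)
    (w : Fin l → Fin n → DR) (α β : Fin l → DR)
    (hα : ∀ i, TangibleOrBot (α i)) (hβ : ∀ i, TangibleOrBot (β i))
    (h1 : ∀ j : Fin n, IsGhost (v j + ∑ i, α i * w i j))
    (h2 : ∀ j : Fin n, IsGhost (v j + ∑ i, β i * w i j)) :
    ∀ j : Fin n, IsGhost (v j + ∑ i, DR.hat (α i + β i) * w i j) := by
  intro j
  have hle : ∀ k, val (α k * w k j) ≤ val (DR.hat (α k + β k) * w k j) :=
    fun k => val_hat_mul_le (α k) (β k) (w k j)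
  have hle' : ∀ k, val (β k * w k j) ≤ val (DR.hat (α k + β k) * w k j) := by
    intro k
    have := val_hat_mul_le (β k) (α k) (w k j)
    rwa [add_comm (β k) (α k)] at this
  have hAC : val (∑ i, α i * w i j) ≤ val (∑ i, DR.hat (α i + β i) * w i j) := by
    rw [val_sum, val_sum]
    exact Finset.sup_mono_fun fun i _ => hle i
  refine (ghost_add_iff (v j) _).2 ⟨fun hlt => ?_, fun hlt => ?_⟩
  · exact ((ghost_add_iff (v j) _).1 (h1 j)).1 (lt_of_le_of_lt hAC hlt)
  · rcases sum_structure Finset.univ (fun i => DR.hat (α i + β i) * w i j) with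
      hg | ⟨i, _, hieq, hdom⟩
    · exact hg
    have hbot : val (DR.hat (α i + β i) * w i j) ≠ ⊥ := by
      rw [hieq]
      intro hb
      rw [hb] at hlt
      exact absurd hlt (by simp)
    have main : ∀ (γ : Fin l → DR),
        (∀ j : Fin n, IsGhost (v j + ∑ i, γ i * w i j)) →
        DR.hat (α i + β i) * w i j = γ i * w i j →
        (∀ k, val (γ k * w k j) ≤ val (DR.hat (α k + β k) * w k j)) →
        IsGhost (∑ i, DR.hat (α i + β i) * w i j) := by
      intro γ hγ he hγle
      have hsum : (∑ k, γ k * w k j) = γ i * w i j := by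
        refine sum_eq_dominant Finset.univ _ i (Finset.mem_univ i) ?_ ?_
        · rw [← he]; exact hbot
        · intro k _ hki
          calc val (γ k * w k j) ≤ val (DR.hat (α k + β k) * w k j) := hγle k
            _ < val (DR.hat (α i + β i) * w i j) := hdom k (Finset.mem_univ k) hki
            _ = val (γ i * w i j) := by rw [he]
      have hsum2 : (∑ k, γ k * w k j) = ∑ k, DR.hat (α k + β k) * w k j := by
        rw [hsum, ← he, hieq]
      have := ((ghost_add_iff (v j) _).1 (hγ j)).2 (by rw [hsum2]; exact hlt)
      rwa [hsum2] at this
    rcases key (α i) (β i) (w i j) (hα i) (hβ i) with hg | ⟨he, _⟩ | ⟨he, _⟩ | ⟨he, _⟩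
    · exact hieq ▸ hg
    · exact main α h1 he hle
    · exact main α h1 he hle
    · exact main β h2 he hle'
end
end

section
/- Let V be a D(ℝ)-submodule of D(ℝ)^(n) and let S be a finite subset of V that tropically spans V. Then S has at least rank(V) elements. -/
noncomputable section

open DR

namespace AuxTrop
open DR Finset

/-! ### Basic lemmas about `val` and `IsGhost` -/

lemma val_eq_bot_iff {x : DR} : x.val = ⊥ ↔ x = DR.bot := by
  cases x <;> simp [DR.val]

lemma val_add (x y : DR) : (x + y).val = x.val ⊔ y.val := by
  cases x with
  | bot =>
    show (DR.add .bot y).val = _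
    rw [DR.bot_add]; simp [DR.val]
  | nb b r =>
    cases y with
    | bot =>
      show (DR.add _ .bot).val = _
      rw [DR.add_bot]; simp [DR.val]
    | nb c s =>
      show (DR.add _ _).val = _
      simp only [DR.add]
      split_ifs with h1 h2 <;> simp [DR.val] <;> linarith

lemma isGhost_zero : IsGhost (0 : DR) := trivial

lemma isGhost_add {x y : DR} (hx : IsGhost x) (hy : IsGhost y) : IsGhost (x + y) := by
  cases x with
  | bot => show IsGhost (DR.add .bot y); rwa [DR.bot_add]
  | nb b r =>
    cases y with
    | bot => show IsGhost (DR.add _ .bot); rwa [DR.add_bot]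
    | nb c s =>
      show IsGhost (DR.add _ _)
      simp only [DR.IsGhost] at hx hy
      subst hx; subst hy
      simp only [DR.add]
      split_ifs <;> trivial

lemma isGhost_mul_right {x y : DR} (hy : IsGhost y) : IsGhost (x * y) := by
  cases x with
  | bot => show IsGhost (DR.mul .bot y); rw [DR.bot_mul]; trivial
  | nb b r =>
    cases y with
    | bot => show IsGhost (DR.mul _ .bot); rw [DR.mul_bot]; trivial
    | nb c s =>
      show IsGhost (DR.mul _ _)
      simp only [DR.IsGhost] at hy
      subst hy
      simp [DR.mul, DR.IsGhost]

lemma isGhost_mul_left {x y : DR} (hx : IsGhost x) : IsGhost (x * y) := by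
  rw [mul_comm]; exact isGhost_mul_right hx

lemma isGhost_sum {ι : Type*} {s : Finset ι} {f : ι → DR}
    (h : ∀ i ∈ s, IsGhost (f i)) : IsGhost (∑ i ∈ s, f i) :=
  Finset.sum_induction f IsGhost (fun _ _ => isGhost_add) isGhost_zero h

lemma isGhost_add_of_val_eq {x y : DR} (h : x.val = y.val) : IsGhost (x + y) := by
  cases x with
  | bot =>
    cases y with
    | bot => show IsGhost (DR.add .bot .bot); trivial
    | nb c s => simp [DR.val] at h
  | nb b r =>
    cases y with
    | bot => simp [DR.val] at h
    | nb c s =>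
      simp only [DR.val, WithBot.coe_inj] at h
      subst h
      show IsGhost (DR.add _ _)
      simp [DR.add, DR.IsGhost]

lemma isGhost_add_right_of_le {x y : DR} (hx : IsGhost x) (h : y.val ≤ x.val) :
    IsGhost (x + y) := by
  cases y with
  | bot => show IsGhost (DR.add _ .bot); rwa [DR.add_bot]
  | nb c s =>
    cases x with
    | bot => simp [DR.val] at h
    | nb b r =>
      simp only [DR.IsGhost] at hx
      subst hx
      simp only [DR.val, WithBot.coe_le_coe] at h
      show IsGhost (DR.add _ _)
      simp only [DR.add]
      split_ifs with h1 h2 <;> first | trivial | (exact absurd h1 (not_lt.mpr h))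

lemma val_sum {ι : Type*} (s : Finset ι) (f : ι → DR) :
    (∑ i ∈ s, f i).val = s.sup (fun i => (f i).val) := by
  classical
  induction s using Finset.cons_induction with
  | empty => simp [DR.val]
  | cons i s hi ih => rw [Finset.sum_cons, Finset.sup_cons, val_add, ih]

lemma val_mul_tangible (a : ℝ) (y : DR) :
    (DR.nb false a * y).val = (a : WithBot ℝ) + y.val := by
  cases y with
  | bot => show (DR.mul _ .bot).val = _; rw [DR.mul_bot]; simp [DR.val]
  | nb c s =>
    show (DR.mul _ _).val = _
    simp only [DR.mul, DR.val]
    rw [← WithBot.coe_add]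

/-- If the sup of values of a finite family is `⊥`, or is attained at two distinct
indices, then the sum is ghost. -/
lemma isGhost_sum_of_ties {ι : Type*} [DecidableEq ι] {I : Finset ι} {f : ι → DR}
    (h : I.sup (fun i => (f i).val) = ⊥ ∨
      ∃ i1 ∈ I, ∃ i2 ∈ I, i1 ≠ i2 ∧
        (f i1).val = I.sup (fun i => (f i).val) ∧
        (f i2).val = I.sup (fun i => (f i).val)) :
    IsGhost (∑ i ∈ I, f i) := by
  rcases h with h | ⟨i1, h1, i2, h2, hne, e1, e2⟩
  · apply isGhost_sum
    intro i hi
    have : (f i).val = ⊥ :=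
      le_bot_iff.mp (h ▸ Finset.le_sup (f := fun i => (f i).val) hi)
    rw [val_eq_bot_iff.mp this]
    trivial
  · have h2' : i2 ∈ I.erase i1 := Finset.mem_erase.mpr ⟨fun he => hne he.symm, h2⟩
    have hsplit : ∑ i ∈ I, f i = (f i1 + f i2) + ∑ i ∈ (I.erase i1).erase i2, f i := by
      rw [add_assoc, Finset.add_sum_erase _ f h2', Finset.add_sum_erase _ f h1]
    rw [hsplit]
    apply isGhost_add_right_of_le
    · exact isGhost_add_of_val_eq (e1.trans e2.symm)
    · rw [val_add, val_sum, e1, e2, sup_idem]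
      refine Finset.sup_mono ?_
      exact (Finset.erase_subset _ _).trans (Finset.erase_subset _ _)

lemma sum_ne_bot {ι : Type*} {s : Finset ι} {g : ι → WithBot ℝ}
    (h : ∀ i ∈ s, g i ≠ ⊥) : ∑ i ∈ s, g i ≠ ⊥ := by
  classical
  induction s using Finset.cons_induction with
  | empty => simp
  | cons i s hi ih =>
    rw [Finset.sum_cons]
    intro hb
    rcases WithBot.add_eq_bot.mp hb with hb | hb
    · exact h i (Finset.mem_cons_self i s) hb
    · exact ih (fun i hi => h i (Finset.mem_cons_of_mem hi)) hb


/-- Key combinatorial lemma: given a matrix `x` over `ℝ ∪ {-∞}`, a column set `K` and a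
row set `R` with `|R| ≥ |K| + 1`, there are a nonempty `I ⊆ R` and reals `a i` such that in
every column of `K` the maximum of `a i + x i j` over `I` is `⊥` or attained twice. -/
lemma comb {ι κ : Type*} [Fintype ι] [Fintype κ] [DecidableEq ι] [DecidableEq κ]
    (x : ι → κ → WithBot ℝ) (N : ℕ) :
    ∀ (K : Finset κ) (R : Finset ι), K.card ≤ N → K.card + 1 ≤ R.card →
    ∃ I : Finset ι, I ⊆ R ∧ I.Nonempty ∧ ∃ a : ι → ℝ,
      ∀ j ∈ K, (I.sup (fun i => (a i : WithBot ℝ) + x i j) = ⊥) ∨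
        (∃ i1 ∈ I, ∃ i2 ∈ I, i1 ≠ i2 ∧
          ((a i1 : WithBot ℝ) + x i1 j = I.sup (fun i => (a i : WithBot ℝ) + x i j)) ∧
          ((a i2 : WithBot ℝ) + x i2 j = I.sup (fun i => (a i : WithBot ℝ) + x i j))) := by
  induction N with
  | zero =>
    intro K R hKN hKR
    have hK : K = ∅ := Finset.card_eq_zero.mp (Nat.le_zero.mp hKN)
    obtain ⟨i0, hi0⟩ : R.Nonempty := Finset.card_pos.mp (by omega)
    exact ⟨{i0}, by simpa using hi0, ⟨i0, Finset.mem_singleton_self i0⟩, fun _ => 0,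
      by simp [hK]⟩
  | succ N ih =>
    intro K R hKN hKR
    classical
    obtain ⟨i0, hi0⟩ : R.Nonempty := Finset.card_pos.mp (by omega)
    haveI : Nonempty ι := ⟨i0⟩
    set W : (κ → ι) → WithBot ℝ := fun σ => ∑ j ∈ K, x (σ j) j with hW
    set cond : ι → (κ → ι) → Prop := fun i σ =>
      (∀ j ∈ K, σ j ∈ R.erase i) ∧ (∀ j ∈ K, ∀ j' ∈ K, σ j = σ j' → j = j') with hcond
    set δ : ι → WithBot ℝ :=
      fun i => Finset.univ.sup (fun σ : κ → ι => if cond i σ then W σ else ⊥) with hδ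
    have hδapp : ∀ i, δ i = Finset.univ.sup (fun σ : κ → ι => if cond i σ then W σ else ⊥) :=
      fun _ => rfl
    by_cases hex : ∃ i ∈ R, δ i ≠ ⊥
    · -- Cramer case
      obtain ⟨i0', hi0R, hi0d⟩ := hex
      set I : Finset ι := R.filter (fun i => δ i ≠ ⊥) with hI
      have hIR : I ⊆ R := Finset.filter_subset _ _
      have hInon : I.Nonempty := ⟨i0', Finset.mem_filter.mpr ⟨hi0R, hi0d⟩⟩
      have hImem : ∀ i ∈ I, δ i ≠ ⊥ := fun i hi => (Finset.mem_filter.mp hi).2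
      set a : ι → ℝ := fun i => WithBot.unbotD 0 (δ i) with ha
      have hacoe : ∀ i ∈ I, (a i : WithBot ℝ) = δ i := by
        intro i hi
        obtain ⟨r, hr⟩ := WithBot.ne_bot_iff_exists.mp (hImem i hi)
        show ((WithBot.unbotD 0 (δ i) : ℝ) : WithBot ℝ) = δ i
        rw [← hr]
        rfl
      refine ⟨I, hIR, hInon, a, ?_⟩
      intro j hj
      by_cases hMbot : I.sup (fun i => (a i : WithBot ℝ) + x i j) = ⊥
      · exact Or.inl hMbot
      right
      set M := I.sup (fun i => (a i : WithBot ℝ) + x i j) with hM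
      obtain ⟨i1, hi1I, hi1⟩ :=
        Finset.exists_mem_eq_sup I hInon (fun i => (a i : WithBot ℝ) + x i j)
      obtain ⟨σ1, -, hσ1⟩ := Finset.exists_mem_eq_sup Finset.univ Finset.univ_nonempty
        (fun σ : κ → ι => if cond i1 σ then W σ else ⊥)
      have hδ1 : δ i1 ≠ ⊥ := hImem i1 hi1I
      have hc1 : cond i1 σ1 := by
        by_contra hc
        rw [hδapp i1, hσ1, if_neg hc] at hδ1
        exact hδ1 rfl
      have hδ1w : δ i1 = W σ1 := by rw [hδapp i1, hσ1, if_pos hc1]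
      set i2 := σ1 j with hi2def
      have hi2R : i2 ∈ R.erase i1 := hc1.1 j hj
      have hi2ne : i2 ≠ i1 := (Finset.mem_erase.mp hi2R).1
      set Rres := ∑ k ∈ K.erase j, x (σ1 k) k with hRres
      have hsplit : W σ1 = x i2 j + Rres := (Finset.add_sum_erase K _ hj).symm
      set σ2 := Function.update σ1 j i1 with hσ2def
      have hσ2j : σ2 j = i1 := Function.update_self j i1 σ1
      have hσ2k : ∀ k, k ≠ j → σ2 k = σ1 k := fun k hk => Function.update_of_ne hk i1 σ1
      have hc2 : cond i2 σ2 := by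
        constructor
        · intro k hk
          by_cases hkj : k = j
          · subst hkj
            rw [hσ2j]
            exact Finset.mem_erase.mpr ⟨fun he => hi2ne he.symm, hIR hi1I⟩
          · rw [hσ2k k hkj]
            have h1 := hc1.1 k hk
            exact Finset.mem_erase.mpr
              ⟨fun he => hkj (hc1.2 k hk j hj he), (Finset.mem_erase.mp h1).2⟩
        · intro k hk k' hk' he
          by_cases hkj : k = j <;> by_cases hk'j : k' = j
          · rw [hkj, hk'j]
          · exfalso
            rw [hkj, hσ2j, hσ2k k' hk'j] at he
            exact (Finset.mem_erase.mp (hc1.1 k' hk')).1 he.symm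
          · exfalso
            rw [hk'j, hσ2j, hσ2k k hkj] at he
            exact (Finset.mem_erase.mp (hc1.1 k hk)).1 he
          · rw [hσ2k k hkj, hσ2k k' hk'j] at he
            exact hc1.2 k hk k' hk' he
      have hw2 : W σ2 = x i1 j + Rres := by
        show (∑ k ∈ K, x (σ2 k) k) = _
        rw [← Finset.add_sum_erase K _ hj, hσ2j]
        congr 1
        exact Finset.sum_congr rfl fun k hk => by rw [hσ2k k (Finset.mem_erase.mp hk).1]
      have hle2 : x i1 j + Rres ≤ δ i2 := by
        have h : (if cond i2 σ2 then W σ2 else ⊥) ≤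
            Finset.univ.sup (fun σ : κ → ι => if cond i2 σ then W σ else ⊥) :=
          Finset.le_sup (f := fun σ : κ → ι => if cond i2 σ then W σ else ⊥)
            (Finset.mem_univ σ2)
        rw [if_pos hc2, hw2] at h
        rw [hδapp i2]
        exact h
      have ha1 : (a i1 : WithBot ℝ) = δ i1 := hacoe i1 hi1I
      have hMval : M = x i2 j + Rres + x i1 j := by
        rw [hM, hi1, ha1, hδ1w, hsplit]
      have hbots : x i2 j ≠ ⊥ ∧ Rres ≠ ⊥ ∧ x i1 j ≠ ⊥ := by
        refine ⟨fun h => hMbot ?_, fun h => hMbot ?_, fun h => hMbot ?_⟩ <;>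
          rw [hMval] <;> simp [h]
      have hδ2ne : δ i2 ≠ ⊥ := by
        intro h
        rw [h, le_bot_iff, WithBot.add_eq_bot] at hle2
        rcases hle2 with h' | h'
        exacts [hbots.2.2 h', hbots.2.1 h']
      have hi2I : i2 ∈ I := Finset.mem_filter.mpr ⟨(Finset.mem_erase.mp hi2R).2, hδ2ne⟩
      have ha2 : (a i2 : WithBot ℝ) = δ i2 := hacoe i2 hi2I
      have hle : (a i2 : WithBot ℝ) + x i2 j ≤ M :=
        Finset.le_sup (f := fun i => (a i : WithBot ℝ) + x i j) hi2I
      have hge : M ≤ (a i2 : WithBot ℝ) + x i2 j := by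
        rw [hMval, ha2]
        calc x i2 j + Rres + x i1 j = (x i1 j + Rres) + x i2 j := by abel
        _ ≤ δ i2 + x i2 j := add_le_add_left hle2 _
      exact ⟨i1, hi1I, i2, hi2I, fun he => hi2ne he.symm, hi1.symm, le_antisymm hle hge⟩
    · -- Hall case
      push_neg at hex
      set t : κ → Finset ι := fun j => R.filter (fun i => x i j ≠ ⊥) with ht
      have htapp : ∀ j, t j = R.filter (fun i => x i j ≠ ⊥) := fun _ => rfl
      have hnoinj : ¬ ∃ f : {j // j ∈ K} → ι, Function.Injective f ∧ ∀ j : {j // j ∈ K}, f j ∈ t ↑j := by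
        rintro ⟨f, hfinj, hft⟩
        set img := Finset.univ.image f with himgdef
        have himg : img.card = K.card := by
          rw [himgdef, Finset.card_image_of_injective _ hfinj, Finset.card_univ,
            Fintype.card_coe]
        obtain ⟨i1, hi1⟩ : (R \ img).Nonempty := by
          apply Finset.card_pos.mp
          have := Finset.le_card_sdiff img R
          omega
        rw [Finset.mem_sdiff] at hi1
        set σ : κ → ι := fun j => if h : j ∈ K then f ⟨j, h⟩ else i1 with hσdef
        have hσmem : ∀ j (h : j ∈ K), σ j = f ⟨j, h⟩ := by
          intro j h
          show (if h : j ∈ K then f ⟨j, h⟩ else i1) = _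
          rw [dif_pos h]
        have hcondσ : cond i1 σ := by
          constructor
          · intro j hj
            rw [hσmem j hj]
            have hf := hft ⟨j, hj⟩
            rw [htapp] at hf
            refine Finset.mem_erase.mpr ⟨fun he => hi1.2 ?_, (Finset.mem_filter.mp hf).1⟩
            exact Finset.mem_image.mpr ⟨⟨j, hj⟩, Finset.mem_univ _, he⟩
          · intro j hj j' hj' he
            rw [hσmem j hj, hσmem j' hj'] at he
            exact congrArg Subtype.val (hfinj he)
        have hWσ : W σ ≠ ⊥ := by
          show (∑ j ∈ K, x (σ j) j) ≠ ⊥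
          apply sum_ne_bot
          intro j hj
          rw [hσmem j hj]
          have hf := hft ⟨j, hj⟩
          rw [htapp] at hf
          exact (Finset.mem_filter.mp hf).2
        have hle : (if cond i1 σ then W σ else ⊥) ≤
            Finset.univ.sup (fun σ : κ → ι => if cond i1 σ then W σ else ⊥) :=
          Finset.le_sup (f := fun σ : κ → ι => if cond i1 σ then W σ else ⊥)
            (Finset.mem_univ σ)
        rw [if_pos hcondσ, ← hδapp i1, hex i1 hi1.1, le_bot_iff] at hle
        exact hWσ hle
      obtain ⟨s, hs⟩ : ∃ s : Finset {j // j ∈ K},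
          ¬ (s.card ≤ (s.biUnion (fun j => t ↑j)).card) := by
        by_contra h
        push_neg at h
        exact hnoinj
          ((Finset.all_card_le_biUnion_card_iff_exists_injective
            (fun j : {j // j ∈ K} => t ↑j)).mp h)
      push_neg at hs
      set C : Finset κ := s.image Subtype.val with hC
      have hCK : C ⊆ K := by
        intro j hj
        obtain ⟨j', -, rfl⟩ := Finset.mem_image.mp hj
        exact j'.2
      have hCcard : C.card = s.card := Finset.card_image_of_injective _ Subtype.val_injective
      set NC := s.biUnion (fun j => t ↑j) with hNC
      have key : ∀ j ∈ C, ∀ i ∈ R, i ∉ NC → x i j = ⊥ := by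
        intro j hj i hiR hiN
        by_contra hxne
        obtain ⟨j', hj's, hj'e⟩ := Finset.mem_image.mp hj
        refine hiN (Finset.mem_biUnion.mpr ⟨j', hj's, ?_⟩)
        rw [htapp, hj'e]
        exact Finset.mem_filter.mpr ⟨hiR, hxne⟩
      have h4 : NC.card < C.card := by rw [hCcard]; exact hs
      have hCpos : 1 ≤ C.card := by omega
      have hK'c : (K \ C).card = K.card - C.card := Finset.card_sdiff_of_subset hCK
      have hCleK : C.card ≤ K.card := Finset.card_le_card hCK
      have h1 : (K \ C).card ≤ N := by omega
      have h2 : (K \ C).card + 1 ≤ (R \ NC).card := by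
        have h3 := Finset.le_card_sdiff NC R
        omega
      obtain ⟨I, hIR', hInon, a, hprop⟩ := ih (K \ C) (R \ NC) h1 h2
      refine ⟨I, hIR'.trans Finset.sdiff_subset, hInon, a, ?_⟩
      intro j hj
      by_cases hjC : j ∈ C
      · left
        rw [Finset.sup_eq_bot_iff]
        intro i hi
        have hiR' := Finset.mem_sdiff.mp (hIR' hi)
        rw [key j hjC i hiR'.1 hiR'.2]
        exact WithBot.add_bot _
      · exact hprop j (Finset.mem_sdiff.mpr ⟨hj, hjC⟩)
/-- Any family of more than `n` vectors in `D(ℝ)^(n)` is tropically dependent. -/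
lemma tropDep_of_card {ι : Type*} [Fintype ι] {n : ℕ} (v : ι → Fin n → DR)
    (h : n + 1 ≤ Fintype.card ι) : TropDep v := by
  classical
  obtain ⟨I, -, hInon, a, hprop⟩ :=
    comb (fun i (j : Fin n) => (v i j).val) n Finset.univ Finset.univ (by simp)
      (by simpa using h)
  refine ⟨I, hInon, fun i => DR.nb false (a i), fun i _ => trivial, ?_⟩
  intro j
  apply isGhost_sum_of_ties
  have hval : ∀ i, (DR.nb false (a i) * v i j).val = (a i : WithBot ℝ) + (v i j).val :=
    fun i => val_mul_tangible (a i) (v i j)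
  have hsup : I.sup (fun i => (DR.nb false (a i) * v i j).val) =
      I.sup (fun i => (a i : WithBot ℝ) + (v i j).val) :=
    Finset.sup_congr rfl (fun i _ => hval i)
  rcases hprop j (Finset.mem_univ j) with h' | ⟨i1, h1, i2, h2, hne, e1, e2⟩
  · left; rw [hsup]; exact h'
  · right
    exact ⟨i1, h1, i2, h2, hne, by rw [hsup, hval i1]; exact e1,
      by rw [hsup, hval i2]; exact e2⟩

end AuxTrop

open AuxTrop

/-- A finite tropically spanning set of a subspace `V` of `D(ℝ)^(n)` has at least
`rank V` elements. -/
theorem spanning_set_card_ge_rank (n : ℕ) (V : Submodule DR (Fin n → DR))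
    (S : Set (Fin n → DR)) (hS : S ⊆ V) (hfin : S.Finite)
    (hspan : ∀ v ∈ V, SpannedBy S v) :
    trank (V : Set (Fin n → DR)) ≤ S.ncard := by
  classical
  unfold trank
  refine csSup_le' ?_
  rintro m ⟨T, hbase, hTfin, rfl⟩
  obtain ⟨hTV, hTindep, -⟩ := hbase
  by_contra hlt
  push_neg at hlt
  apply hTindep
  set SF : Finset (Fin n → DR) := hfin.toFinset with hSF
  have hSFcard : SF.card = S.ncard := (Set.ncard_eq_toFinset_card S hfin).symm
  set TF : Finset (Fin n → DR) := hTfin.toFinset with hTF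
  have hTFcard : TF.card = T.ncard := (Set.ncard_eq_toFinset_card T hTfin).symm
  have hcard : SF.card + 1 ≤ Fintype.card {t // t ∈ TF} := by
    rw [Fintype.card_coe]; omega
  have hspanT : ∀ t : {t // t ∈ TF}, ∃ I : Finset (Fin n → DR), ↑I ⊆ S ∧ I.Nonempty ∧
      ∃ α : (Fin n → DR) → DR, (∀ w ∈ I, Tangible (α w)) ∧
        ∃ u : Fin n → DR, GhostVec u ∧ t.1 = (fun j => ∑ w ∈ I, α w * w j) + u := by
    intro t
    have htT : t.1 ∈ T := hTfin.mem_toFinset.mp t.2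
    exact hspan t.1 (hTV htT)
  choose It hItS hItne αt hαt ut hut hteq using hspanT
  set e : {w // w ∈ SF} ≃ Fin SF.card := SF.equivFin with he
  set c : {t // t ∈ TF} → Fin SF.card → DR :=
    fun t k => if ((e.symm k : {w // w ∈ SF}) : Fin n → DR) ∈ It t
      then αt t ((e.symm k : {w // w ∈ SF}) : Fin n → DR) else 0 with hc
  have hdep : TropDep c := tropDep_of_card c hcard
  obtain ⟨J, hJne, β, hβtan, hβghost⟩ := hdep
  set α' : (Fin n → DR) → DR := fun w => if h : w ∈ TF then β ⟨w, h⟩ else 0 with hα'def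
  have hα' : ∀ t : {t // t ∈ TF}, α' t.1 = β t := by
    intro t
    rw [hα'def]
    simp only [t.2, dif_pos]
  have hinj : ∀ x ∈ J, ∀ y ∈ J, (x : Fin n → DR) = (y : Fin n → DR) → x = y :=
    fun x _ y _ h => Subtype.val_injective h
  show SetTropDep T
  refine ⟨J.image Subtype.val, ?_, hJne.image _, α', ?_, ?_⟩
  · intro w hw
    obtain ⟨t, -, rfl⟩ := Finset.mem_image.mp hw
    exact hTfin.mem_toFinset.mp t.2
  · intro w hw
    obtain ⟨t, ht, rfl⟩ := Finset.mem_image.mp hw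
    rw [hα' t]
    exact hβtan t ht
  · intro j
    have hgoal : (∑ w ∈ J.image Subtype.val, α' w * w j) =
        (∑ t ∈ J, β t * (∑ w ∈ It t, αt t w * w j)) + ∑ t ∈ J, β t * ut t j := by
      rw [Finset.sum_image hinj, ← Finset.sum_add_distrib]
      refine Finset.sum_congr rfl (fun t ht => ?_)
      rw [hα' t, ← mul_add]
      congr 1
      simpa using congrFun (hteq t) j
    rw [hgoal]
    apply isGhost_add
    · have h1 : ∀ t ∈ J, β t * (∑ w ∈ It t, αt t w * w j) =
          ∑ w ∈ SF, β t * ((if w ∈ It t then αt t w else 0) * w j) := by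
        intro t _
        rw [← Finset.mul_sum]
        congr 1
        rw [← Finset.sum_subset (fun w hw => hfin.mem_toFinset.mpr (hItS t hw))
          (fun w _ hw => by rw [if_neg hw, zero_mul])]
        exact (Finset.sum_congr rfl (fun w hw => by rw [if_pos hw])).symm
      have main : (∑ t ∈ J, β t * (∑ w ∈ It t, αt t w * w j)) =
          ∑ w ∈ SF.attach, (∑ t ∈ J, β t * c t (e w)) * (w : Fin n → DR) j := by
        calc ∑ t ∈ J, β t * (∑ w ∈ It t, αt t w * w j)
            = ∑ t ∈ J, ∑ w ∈ SF, β t * ((if w ∈ It t then αt t w else 0) * w j) :=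
              Finset.sum_congr rfl h1
          _ = ∑ w ∈ SF, ∑ t ∈ J, β t * ((if w ∈ It t then αt t w else 0) * w j) :=
              Finset.sum_comm
          _ = ∑ w ∈ SF.attach, ∑ t ∈ J,
                β t * ((if (w : Fin n → DR) ∈ It t then αt t w else 0) * (w : Fin n → DR) j) :=
              (Finset.sum_attach SF _).symm
          _ = ∑ w ∈ SF.attach, (∑ t ∈ J, β t * c t (e w)) * (w : Fin n → DR) j := by
              refine Finset.sum_congr rfl (fun w _ => ?_)
              rw [Finset.sum_mul]
              refine Finset.sum_congr rfl (fun t _ => ?_)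
              have hcw : c t (e w) = if (w : Fin n → DR) ∈ It t then αt t w else 0 := by
                rw [hc]
                simp only [Equiv.symm_apply_apply]
              rw [hcw, mul_assoc]
      rw [main]
      apply isGhost_sum
      intro w _
      exact isGhost_mul_left (hβghost (e w))
    · exact isGhost_sum (fun t _ => isGhost_mul_right (hut t j))
end
end

section
/- Let V be a D(ℝ)-submodule of D(ℝ)^(n), let v ∈ V with v ∉ G₀^(n), let α ∈ T be a tangible scalar and w ∈ V, and suppose v ⊨ αv + w. Then α ≤_ν 𝟙 (the value of α is at most that of the multiplicative identity); moreover, if α <_ν 𝟙, then v ⊨ w. -/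
noncomputable section

open DR

theorem DR.val_add_s11 (x y : DR) : (x + y).val = max x.val y.val := by
  show (DR.add x y).val = _
  cases x <;> cases y <;> simp [DR.add, DR.val]
  case nb.nb b r c s =>
    split_ifs <;> simp [DR.val] <;> linarith

theorem DR.val_mul_s11 (x y : DR) : (x * y).val = x.val + y.val := by
  show (DR.mul x y).val = _
  cases x <;> cases y <;> simp [DR.mul, DR.val]

theorem DR.add_eq_right_s11 (x y : DR) (h : nuLt x y) : x + y = y := by
  show DR.add x y = y
  cases x with
  | bot => exact DR.bot_add y
  | nb b r =>
    cases y with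
    | bot => exact absurd h (by simp [nuLt, DR.val])
    | nb c s =>
      have h' : ((r : ℝ) : WithBot ℝ) < ((s : ℝ) : WithBot ℝ) := h
      have : r < s := by exact_mod_cast h'
      simp [DR.add, this]

/-- If a non-ghost `v ∈ V` satisfies `v ⊨ α • v + w` with `α` tangible, then
`α ≤_ν 𝟙`; and if moreover `α <_ν 𝟙`, then `v ⊨ w`. -/
theorem ghost_surpass_smul_self (n : ℕ) (V : Submodule DR (Fin n → DR))
    (v w : Fin n → DR) (hv : v ∈ V) (hw : w ∈ V) (hvg : ¬ GhostVec v)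
    (α : DR) (hα : Tangible α) (h : GhostSurpVec v (α • v + w)) :
    nuLe α 1 ∧ (nuLt α 1 → GhostSurpVec v w) := by
  obtain ⟨u, hu, heq⟩ := h
  have hpt : ∀ j, v j = α • v j + (w j + u j) := by
    intro j
    have := congrFun heq j
    simp only [Pi.add_apply, Pi.smul_apply] at this
    exact this.trans (add_assoc _ _ _)
  obtain ⟨a, rfl⟩ : ∃ a : ℝ, α = nb false a := by
    cases α with
    | bot => exact absurd hα (by simp [Tangible])
    | nb b r =>
      cases b with
      | false => exact ⟨r, rfl⟩
      | true => exact absurd hα (by simp [Tangible])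
  simp only [GhostVec, not_forall] at hvg
  obtain ⟨j₀, hj₀⟩ := hvg
  obtain ⟨r, hr⟩ : ∃ r : ℝ, v j₀ = nb false r := by
    cases hvj : v j₀ with
    | bot => rw [hvj] at hj₀; exact absurd trivial hj₀
    | nb b r =>
      cases b with
      | false => exact ⟨r, rfl⟩
      | true => rw [hvj] at hj₀; exact absurd rfl hj₀
  have hsmul : ∀ x : DR, (nb false a) • x = (nb false a) * x := fun x => rfl
  have key := hpt j₀
  rw [hr, hsmul] at key
  have hval := congrArg DR.val key
  rw [DR.val_add_s11, DR.val_mul_s11] at hval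
  have hle : DR.val (nb false a) + DR.val (nb false r) ≤ DR.val (nb false r) := by
    conv_rhs => rw [hval]
    exact le_max_left _ _
  have ha0 : a ≤ 0 := by
    simp only [DR.val] at hle
    have : (a + r : ℝ) ≤ r := by exact_mod_cast hle
    linarith
  constructor
  · show DR.val (nb false a) ≤ DR.val (1 : DR)
    show ((a : ℝ) : WithBot ℝ) ≤ ((0 : ℝ) : WithBot ℝ)
    exact_mod_cast ha0
  · intro hlt
    have ha : a < 0 := by
      have : ((a : ℝ) : WithBot ℝ) < ((0 : ℝ) : WithBot ℝ) := hlt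
      exact_mod_cast this
    refine ⟨u, hu, ?_⟩
    funext j
    show v j = w j + u j
    have hj := hpt j
    rw [hsmul] at hj
    cases hvj : v j with
    | bot =>
      rw [hvj] at hj
      rw [show (nb false a) * DR.bot = DR.bot from rfl] at hj
      exact hj.trans (DR.bot_add _)
    | nb b s =>
      rw [hvj] at hj
      have hmv : DR.val ((nb false a) * (nb b s)) = ((a + s : ℝ) : WithBot ℝ) := by
        simp [DR.val_mul_s11, DR.val]; rfl
      have hv2 : DR.val (nb b s) = ((s : ℝ) : WithBot ℝ) := rfl
      have hval2 := congrArg DR.val hj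
      rw [DR.val_add_s11, hmv, hv2] at hval2
      have hwu : DR.val (w j + u j) = ((s : ℝ) : WithBot ℝ) := by
        rcases max_cases (((a + s : ℝ) : WithBot ℝ)) (DR.val (w j + u j)) with ⟨h1, _⟩ | ⟨h1, _⟩
        · rw [h1] at hval2
          exfalso
          have : (s : ℝ) = a + s := by exact_mod_cast hval2
          linarith
        · rw [h1] at hval2; exact hval2.symm
      have hlt2 : nuLt ((nb false a) * (nb b s)) (w j + u j) := by
        show DR.val _ < DR.val _
        rw [hmv, hwu]
        exact_mod_cast (by linarith : a + s < s)
      rw [DR.add_eq_right_s11 _ _ hlt2] at hj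
      exact hj
end
end

section
/- Let V be a D(ℝ)-submodule of D(ℝ)^(n). Every critical vector v ∈ V is almost tangible; that is, if v is critical, then for every w ∈ V, v ⊨ w implies w = v. -/
noncomputable section

open DR

/-- Projective equivalence: `v = α • w` for a tangible scalar `α`. -/
def ProjEquiv {n : ℕ} (v w : Fin n → DR) : Prop := ∃ α : DR, Tangible α ∧ v = α • w

/-- `v` is a critical vector of `V`: one cannot write `v ⊨ v₁ + v₂` with
`v₁, v₂ ∈ V` both outside the projective class of `v`. -/
def Critical {n : ℕ} (V : Set (Fin n → DR)) (v : Fin n → DR) : Prop :=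
  ¬ ∃ v₁ ∈ V, ∃ v₂ ∈ V, ¬ ProjEquiv v₁ v ∧ ¬ ProjEquiv v₂ v ∧ GhostSurpVec v (v₁ + v₂)

/-- If a sum is `-∞` then both summands are. -/
theorem aux_add_eq_bot {x y : DR} (h : x + y = DR.bot) : x = DR.bot ∧ y = DR.bot := by
  change DR.add x y = DR.bot at h
  cases x <;> cases y <;> simp_all [DR.add] <;> split_ifs at h <;> simp_all

/-- If a ghost surpasses and the result is tangible, the summand ghost was dominated. -/
theorem aux_surp_tangible {y c : DR} {r : ℝ} (hc : IsGhost c)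
    (h : y + c = DR.nb false r) : y = DR.nb false r := by
  change DR.add y c = DR.nb false r at h
  cases c with
  | bot => rwa [DR.add_bot] at h
  | nb b s =>
    cases b with
    | false => exact absurd hc (by simp [IsGhost])
    | true =>
      cases y with
      | bot => rw [DR.bot_add] at h; exact absurd h (by simp)
      | nb d t =>
        simp only [DR.add] at h
        split_ifs at h
        · exact absurd h (by simp)
        · exact h
        · exact absurd h (by simp)

/-- Adding a strictly smaller tangible multiple is absorbed. -/
theorem aux_absorb (n : ℕ) (w : Fin n → DR) : w + (DR.nb false (-1)) • w = w := by
  funext j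
  show DR.add (w j) (DR.mul (DR.nb false (-1)) (w j)) = w j
  cases h : w j with
  | bot => rfl
  | nb b r =>
    simp only [DR.mul, Bool.false_or, DR.add]
    split_ifs <;> first | rfl | (exfalso; linarith)

/-- Every critical vector of a subspace `V` of `D(ℝ)^(n)` is almost tangible. -/
theorem critical_is_almost_tangible (n : ℕ) (V : Submodule DR (Fin n → DR))
    (v : Fin n → DR) (hv : v ∈ V) (hc : Critical (V : Set (Fin n → DR)) v) :
    ∀ w ∈ V, GhostSurpVec v w → w = v := by
  rintro w hw ⟨u, hu, hvw⟩
  by_contra hne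
  by_cases hall : ∀ j, IsGhost (v j)
  · -- v is entirely ghost
    by_cases hv0 : v = 0
    · -- then w = 0 = v
      apply hne
      funext j
      have hj : w j + u j = DR.bot := by
        have := congrFun hvw j
        rw [hv0] at this
        exact this.symm
      have := (aux_add_eq_bot hj).1
      rw [hv0]; rw [this]; rfl
    · -- v ≠ 0 all ghost: contradict criticality with v₁ = v₂ = 0
      have h0np : ¬ ProjEquiv (0 : Fin n → DR) v := by
        rintro ⟨α, hα, h0⟩
        rcases α with _ | ⟨b, a⟩
        · exact hα
        cases b
        · apply hv0
          funext j
          have := congrFun h0 j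
          cases hj : v j with
          | bot => rfl
          | nb c r =>
            exfalso
            have : (DR.bot : DR) = DR.mul (DR.nb false a) (v j) := this
            rw [hj] at this
            simp [DR.mul] at this
        · exact hα
      exact hc ⟨0, V.zero_mem, 0, V.zero_mem, h0np, h0np,
        ⟨v, hall, by simp⟩⟩
  · -- v has a tangible coordinate j₀
    push_neg at hall
    obtain ⟨j₀, hj₀⟩ := hall
    obtain ⟨r, hr⟩ : ∃ r, v j₀ = DR.nb false r := by
      cases h : v j₀ with
      | bot => exact absurd (by rw [h]; trivial) hj₀
      | nb b s =>
        cases b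
        · exact ⟨s, rfl⟩
        · exact absurd (by rw [h]; rfl) hj₀
    -- w agrees with v at j₀
    have hwj₀ : w j₀ = DR.nb false r := by
      have h1 : w j₀ + u j₀ = DR.nb false r := by
        have := congrFun hvw j₀
        rw [hr] at this
        exact this.symm
      exact aux_surp_tangible (hu j₀) h1
    by_cases hp : ProjEquiv w v
    · -- w = α • v forces α = 1
      obtain ⟨α, hα, hwα⟩ := hp
      rcases α with _ | ⟨b, a⟩
      · exact hα
      cases b
      · have h1 : w j₀ = DR.mul (DR.nb false a) (v j₀) := congrFun hwα j₀
        rw [hr, hwj₀] at h1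
        have h2 : DR.nb false r = DR.nb false (a + r) := h1
        have ha : a = 0 := by
          have := (DR.nb.injEq .. ▸ h2).2
          linarith
        apply hne
        rw [hwα, ha]
        show (1 : DR) • v = v
        exact one_smul DR v
      · exact hα
    · -- w ∉ [v] : contradict criticality with v₁ = w, v₂ = (-1) • w
      set ε : DR := DR.nb false (-1) with hε
      have hnp2 : ¬ ProjEquiv (ε • w) v := by
        rintro ⟨β, hβ, hβeq⟩
        apply hp
        refine ⟨DR.nb false 1 * β, ?_, ?_⟩
        · rcases β with _ | ⟨c, s⟩
          · exact hβ
          cases c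
          · show Tangible (DR.nb (false || false) (1 + s)); trivial
          · exact hβ
        · have h1 : DR.nb false 1 • (ε • w) = (DR.nb false 1 * β) • v := by
            rw [hβeq, smul_smul]
          rw [smul_smul] at h1
          have h2 : DR.nb false 1 * ε = (1 : DR) := by
            show DR.mul (DR.nb false 1) (DR.nb false (-1)) = DR.nb false 0
            simp [DR.mul]
          rw [h2, one_smul] at h1
          exact h1
      exact hc ⟨w, hw, ε • w, V.smul_mem ε hw, hp, hnp2,
        ⟨u, hu, by rw [aux_absorb n w]; exact hvw⟩⟩
end
end
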